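/- Let q ∈ 𝕀 be primitive and admissible, and let q_α = α_q·q be an extension of q. Then there exists a quaternion z ∈ 𝕀 such that tr(q_α·z̄) + tr((z̄)~·(q_α)~) = 1, where ~ denotes the twist map. -/

import Mathlib

noncomputable section

open Quaternion Classical

/-- √5 as a real number. -/
def sqrt5 : ℝ := Real.sqrt 5

/-- The golden ratio τ = (1+√5)/2. -/
def gold : ℝ := (1 + sqrt5) / 2

/-- membership in K = ℚ(√5) ⊆ ℝ. -/
def inK (x : ℝ) : Prop := ∃ a b : ℚ, x = (a : ℝ) + (b : ℝ) * sqrt5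

/-- The nontrivial field automorphism of K = ℚ(√5) (√5 ↦ -√5), extended by the
identity outside K.  Since `1, √5` are linearly independent over ℚ, the rational
coordinates of an element of K are unique, so this is well defined. -/
noncomputable def conjK (x : ℝ) : ℝ :=
  if h : ∃ a b : ℚ, x = (a : ℝ) + (b : ℝ) * sqrt5 then
    (h.choose : ℝ) - (h.choose_spec.choose : ℝ) * sqrt5
  else x

/-- membership in 𝔬 = ℤ[τ], the ring of integers of ℚ(√5). -/
def inO (x : ℝ) : Prop := ∃ m n : ℤ, x = (m : ℝ) + (n : ℝ) * gold

/-- The twist map (a,b,c,d) ↦ (a',b',d',c') on quaternions. -/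
noncomputable def twist (q : ℍ[ℝ]) : ℍ[ℝ] :=
  ⟨conjK q.re, conjK q.imI, conjK q.imK, conjK q.imJ⟩

/-- reduced norm nr(q) = q q̄ (as a real number). -/
def nr (q : ℍ[ℝ]) : ℝ := (q * star q).re

/-- reduced trace tr(q) = q + q̄ (as a real number). -/
def trq (q : ℍ[ℝ]) : ℝ := (q + star q).re

/-- generators of the icosian ring. -/
def e₁ : ℍ[ℝ] := ⟨1, 0, 0, 0⟩
def e₂ : ℍ[ℝ] := ⟨0, 1, 0, 0⟩
def e₃ : ℍ[ℝ] := ⟨1/2, 1/2, 1/2, 1/2⟩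
def e₄ : ℍ[ℝ] := ⟨(1 - gold)/2, gold/2, 0, 1/2⟩

/-- membership in the icosian ring 𝕀, the 𝔬-span of the four generators. -/
def inI (q : ℍ[ℝ]) : Prop :=
  ∃ c₁ c₂ c₃ c₄ : ℝ, inO c₁ ∧ inO c₂ ∧ inO c₃ ∧ inO c₄ ∧
    q = c₁ • e₁ + c₂ • e₂ + c₃ • e₃ + c₄ • e₄

/-- generators of the copy L of the root lattice A₄. -/
def g₁ : ℍ[ℝ] := ⟨1, 0, 0, 0⟩
def g₂ : ℍ[ℝ] := ⟨-1/2, 1/2, 1/2, 1/2⟩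
def g₃ : ℍ[ℝ] := ⟨0, -1, 0, 0⟩
def g₄ : ℍ[ℝ] := ⟨0, 1/2, (gold - 1)/2, -gold/2⟩

/-- L, the ℤ-span of the four generators, as an additive subgroup of ℍ(ℝ). -/
def Lgrp : AddSubgroup ℍ[ℝ] := AddSubgroup.closure {g₁, g₂, g₃, g₄}

/-- `q` is a primitive icosian. -/
def PrimitiveIcosian (q : ℍ[ℝ]) : Prop :=
  inI q ∧ ∀ α : ℝ, inK α → inI (α • q) → inO α

/-- `q` is admissible with |q q̃| = n. -/
def Admissible (q : ℍ[ℝ]) (n : ℕ) : Prop :=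
  nr q * conjK (nr q) = (n : ℝ) ^ 2

/-- The additive map x ↦ r • (q x q̃) on ℍ(ℝ). -/
noncomputable def rotHom (q : ℍ[ℝ]) (r : ℝ) : ℍ[ℝ] →+ ℍ[ℝ] where
  toFun x := r • (q * x * twist q)
  map_zero' := by simp
  map_add' x y := by
    simp [mul_add, add_mul, smul_add]

/-- Commensurateness of two additive subgroups of ℍ(ℝ). -/
def Commensurate (A B : AddSubgroup ℍ[ℝ]) : Prop :=
  (A ⊓ B).relIndex A ≠ 0 ∧ (A ⊓ B).relIndex B ≠ 0

/-- Image of an additive subgroup under a linear isometry of ℍ(ℝ) ≅ ℝ⁴. -/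
def mapIso (R : ℍ[ℝ] ≃ₗᵢ[ℝ] ℍ[ℝ]) (A : AddSubgroup ℍ[ℝ]) : AddSubgroup ℍ[ℝ] :=
  A.map (R.toLinearEquiv.toLinearMap.toAddMonoidHom)

/-- `R` lies in SO(4,ℝ). -/
def IsRotation (R : ℍ[ℝ] ≃ₗᵢ[ℝ] ℍ[ℝ]) : Prop :=
  LinearMap.det (R.toLinearEquiv.toLinearMap) = 1



/-! ### Auxiliary development -/

lemma sqrt5_nonneg : (0:ℝ) ≤ sqrt5 := Real.sqrt_nonneg 5

lemma sqrt5_sq : sqrt5 * sqrt5 = 5 := Real.mul_self_sqrt (by norm_num)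

lemma irrational_sqrt5 : Irrational sqrt5 := by
  have : Irrational (Real.sqrt (5:ℕ)) := (by norm_num : Nat.Prime 5).irrational_sqrt
  simpa [sqrt5] using this

lemma goldsq : gold ^ 2 = gold + 1 := by
  unfold gold
  have h := sqrt5_sq
  ring_nf
  nlinarith [h]

/-- The fundamental linear independence of `1, √5` over `ℚ`. -/
lemma rat_pair_eq_zero {a b : ℚ} (h : (a:ℝ) + (b:ℝ) * sqrt5 = 0) : a = 0 ∧ b = 0 := by
  by_cases hb : b = 0
  · subst hb; simp at h; exact ⟨by exact_mod_cast h, rfl⟩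
  · exfalso
    apply irrational_sqrt5
    refine ⟨-a / b, ?_⟩
    push_cast
    field_simp
    linarith [h]

lemma rat_pair_unique {a b a' b' : ℚ} (h : (a:ℝ) + (b:ℝ) * sqrt5 = (a':ℝ) + (b':ℝ) * sqrt5) :
    a = a' ∧ b = b' := by
  have h' : ((a - a' : ℚ):ℝ) + ((b - b' : ℚ):ℝ) * sqrt5 = 0 := by push_cast; linarith
  obtain ⟨h1, h2⟩ := rat_pair_eq_zero h'
  constructor <;> [linarith [sub_eq_zero.mp (by exact_mod_cast h1 : a - a' = (0:ℚ))];
    linarith [sub_eq_zero.mp (by exact_mod_cast h2 : b - b' = (0:ℚ))]]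

lemma conjK_spec (a b : ℚ) : conjK ((a:ℝ) + (b:ℝ) * sqrt5) = (a:ℝ) - (b:ℝ) * sqrt5 := by
  unfold conjK
  have h : ∃ a' b' : ℚ, ((a:ℝ) + (b:ℝ) * sqrt5) = (a':ℝ) + (b':ℝ) * sqrt5 := ⟨a, b, rfl⟩
  rw [dif_pos h]
  obtain ⟨h1, h2⟩ := rat_pair_unique h.choose_spec.choose_spec
  have ha : ((h.choose : ℚ) : ℝ) = (a:ℝ) := by exact_mod_cast congrArg (fun x : ℚ => (x:ℝ)) h1.symm
  have hb : ((h.choose_spec.choose : ℚ) : ℝ) = (b:ℝ) := by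
    exact_mod_cast congrArg (fun x : ℚ => (x:ℝ)) h2.symm
  linear_combination ha - sqrt5 * hb

/-! ### The abstract ring ℤ[τ] -/

@[ext] structure Ot where
  a : ℤ
  b : ℤ
deriving DecidableEq

namespace Ot

instance : Zero Ot := ⟨⟨0,0⟩⟩
instance : One Ot := ⟨⟨1,0⟩⟩
instance : Add Ot := ⟨fun x y => ⟨x.a + y.a, x.b + y.b⟩⟩
instance : Neg Ot := ⟨fun x => ⟨-x.a, -x.b⟩⟩
instance : Mul Ot := ⟨fun x y => ⟨x.a * y.a + x.b * y.b, x.a * y.b + x.b * y.a + x.b * y.b⟩⟩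
instance : NatCast Ot := ⟨fun n => ⟨n, 0⟩⟩
instance : IntCast Ot := ⟨fun n => ⟨n, 0⟩⟩

@[simp] lemma zero_a : (0 : Ot).a = 0 := rfl
@[simp] lemma zero_b : (0 : Ot).b = 0 := rfl
@[simp] lemma one_a : (1 : Ot).a = 1 := rfl
@[simp] lemma one_b : (1 : Ot).b = 0 := rfl
@[simp] lemma add_a (x y : Ot) : (x + y).a = x.a + y.a := rfl
@[simp] lemma add_b (x y : Ot) : (x + y).b = x.b + y.b := rfl
@[simp] lemma neg_a (x : Ot) : (-x).a = -x.a := rfl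
@[simp] lemma neg_b (x : Ot) : (-x).b = -x.b := rfl
@[simp] lemma mul_a (x y : Ot) : (x * y).a = x.a * y.a + x.b * y.b := rfl
@[simp] lemma mul_b (x y : Ot) : (x * y).b = x.a * y.b + x.b * y.a + x.b * y.b := rfl
@[simp] lemma intCast_a (n : ℤ) : (n : Ot).a = n := rfl
@[simp] lemma intCast_b (n : ℤ) : (n : Ot).b = 0 := rfl
@[simp] lemma natCast_a (n : ℕ) : (n : Ot).a = n := rfl
@[simp] lemma natCast_b (n : ℕ) : (n : Ot).b = 0 := rfl

instance commRing : CommRing Ot where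
  zero := 0
  one := 1
  add := (· + ·)
  mul := (· * ·)
  neg := (- ·)
  nsmul n x := ⟨n * x.a, n * x.b⟩
  nsmul_zero x := by ext <;> simp [HSMul.hSMul, SMul.smul]
  nsmul_succ n x := by ext <;> simp [HSMul.hSMul, SMul.smul] <;> ring
  zsmul n x := ⟨n * x.a, n * x.b⟩
  zsmul_zero' x := by ext <;> simp [HSMul.hSMul, SMul.smul]
  zsmul_succ' n x := by ext <;> simp [HSMul.hSMul, SMul.smul] <;> push_cast <;> ring
  zsmul_neg' n x := by ext <;> simp [Int.negSucc_eq, HSMul.hSMul, SMul.smul] <;> push_cast <;> ring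
  add_assoc x y z := by ext <;> simp <;> ring
  zero_add x := by ext <;> simp
  add_zero x := by ext <;> simp
  add_comm x y := by ext <;> simp <;> ring
  neg_add_cancel x := by ext <;> simp
  mul_assoc x y z := by ext <;> simp <;> ring
  one_mul x := by ext <;> simp
  mul_one x := by ext <;> simp
  left_distrib x y z := by ext <;> simp <;> ring
  right_distrib x y z := by ext <;> simp <;> ring
  zero_mul x := by ext <;> simp
  mul_zero x := by ext <;> simp
  mul_comm x y := by ext <;> simp <;> ring
  natCast := Nat.cast
  natCast_zero := by ext <;> simp
  natCast_succ n := by ext <;> simp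
  intCast := Int.cast
  intCast_ofNat n := by ext <;> simp
  intCast_negSucc n := by ext <;> simp [Int.negSucc_eq] <;> push_cast <;> ring

@[simp] lemma intCast_a' (n : ℤ) : (Int.cast n : Ot).a = n := rfl
@[simp] lemma intCast_b' (n : ℤ) : (Int.cast n : Ot).b = 0 := rfl
@[simp] lemma natCast_a' (n : ℕ) : (Nat.cast n : Ot).a = n := rfl
@[simp] lemma natCast_b' (n : ℕ) : (Nat.cast n : Ot).b = 0 := rfl

@[simp] lemma sub_a (x y : Ot) : (x - y).a = x.a - y.a := by
  rw [sub_eq_add_neg, sub_eq_add_neg]; simp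
@[simp] lemma sub_b (x y : Ot) : (x - y).b = x.b - y.b := by
  rw [sub_eq_add_neg, sub_eq_add_neg]; simp

/-- The golden ratio as an element of `Ot`. -/
def tau : Ot := ⟨0, 1⟩

/-- Galois conjugation on `Ot`. -/
def conj : Ot →+* Ot where
  toFun x := ⟨x.a + x.b, -x.b⟩
  map_one' := by ext <;> simp
  map_mul' x y := by ext <;> simp <;> ring
  map_zero' := by ext <;> simp
  map_add' x y := by ext <;> simp <;> ring

@[simp] lemma conj_a (x : Ot) : (conj x).a = x.a + x.b := rfl
@[simp] lemma conj_b (x : Ot) : (conj x).b = -x.b := rfl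
@[simp] lemma conj_conj (x : Ot) : conj (conj x) = x := by ext <;> simp

/-- The norm. -/
def nrm (x : Ot) : ℤ := x.a^2 + x.a * x.b - x.b^2

lemma nrm_mul (x y : Ot) : nrm (x * y) = nrm x * nrm y := by
  simp only [nrm, mul_a, mul_b]; ring

@[simp] lemma nrm_one : nrm 1 = 1 := by simp [nrm]

lemma mul_conj_self (x : Ot) : x * conj x = (nrm x : Ot) := by
  ext <;> simp only [mul_a, mul_b, conj_a, conj_b, intCast_a, intCast_b, nrm] <;> ring

lemma nrm_dvd {x y : Ot} (h : x ∣ y) : nrm x ∣ nrm y := by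
  obtain ⟨c, rfl⟩ := h; exact ⟨nrm c, nrm_mul _ _⟩

end Ot

/-! ### The field ℚ(τ) as a ring -/

@[ext] structure Kt where
  x : ℚ
  y : ℚ
deriving DecidableEq

namespace Kt

instance : Zero Kt := ⟨⟨0,0⟩⟩
instance : One Kt := ⟨⟨1,0⟩⟩
instance : Add Kt := ⟨fun u v => ⟨u.x + v.x, u.y + v.y⟩⟩
instance : Neg Kt := ⟨fun u => ⟨-u.x, -u.y⟩⟩
instance : Mul Kt := ⟨fun u v => ⟨u.x * v.x + u.y * v.y, u.x * v.y + u.y * v.x + u.y * v.y⟩⟩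
instance : NatCast Kt := ⟨fun n => ⟨n, 0⟩⟩
instance : IntCast Kt := ⟨fun n => ⟨n, 0⟩⟩

@[simp] lemma zero_x : (0 : Kt).x = 0 := rfl
@[simp] lemma zero_y : (0 : Kt).y = 0 := rfl
@[simp] lemma one_x : (1 : Kt).x = 1 := rfl
@[simp] lemma one_y : (1 : Kt).y = 0 := rfl
@[simp] lemma add_x (u v : Kt) : (u + v).x = u.x + v.x := rfl
@[simp] lemma add_y (u v : Kt) : (u + v).y = u.y + v.y := rfl
@[simp] lemma neg_x (u : Kt) : (-u).x = -u.x := rfl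
@[simp] lemma neg_y (u : Kt) : (-u).y = -u.y := rfl
@[simp] lemma mul_x (u v : Kt) : (u * v).x = u.x * v.x + u.y * v.y := rfl
@[simp] lemma mul_y (u v : Kt) : (u * v).y = u.x * v.y + u.y * v.x + u.y * v.y := rfl
@[simp] lemma intCast_x (n : ℤ) : (n : Kt).x = n := rfl
@[simp] lemma intCast_y (n : ℤ) : (n : Kt).y = 0 := rfl
@[simp] lemma natCast_x (n : ℕ) : (n : Kt).x = n := rfl
@[simp] lemma natCast_y (n : ℕ) : (n : Kt).y = 0 := rfl

instance commRing : CommRing Kt where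
  zero := 0
  one := 1
  add := (· + ·)
  mul := (· * ·)
  neg := (- ·)
  nsmul n x := ⟨n * x.x, n * x.y⟩
  nsmul_zero x := by ext <;> simp [HSMul.hSMul, SMul.smul]
  nsmul_succ n x := by ext <;> simp [HSMul.hSMul, SMul.smul] <;> ring
  zsmul n x := ⟨n * x.x, n * x.y⟩
  zsmul_zero' x := by ext <;> simp [HSMul.hSMul, SMul.smul]
  zsmul_succ' n x := by ext <;> simp [HSMul.hSMul, SMul.smul] <;> push_cast <;> ring
  zsmul_neg' n x := by ext <;> simp [Int.negSucc_eq, HSMul.hSMul, SMul.smul] <;> push_cast <;> ring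
  add_assoc x y z := by ext <;> simp <;> ring
  zero_add x := by ext <;> simp
  add_zero x := by ext <;> simp
  add_comm x y := by ext <;> simp <;> ring
  neg_add_cancel x := by ext <;> simp
  mul_assoc x y z := by ext <;> simp <;> ring
  one_mul x := by ext <;> simp
  mul_one x := by ext <;> simp
  left_distrib x y z := by ext <;> simp <;> ring
  right_distrib x y z := by ext <;> simp <;> ring
  zero_mul x := by ext <;> simp
  mul_zero x := by ext <;> simp
  mul_comm x y := by ext <;> simp <;> ring
  natCast := Nat.cast
  natCast_zero := by ext <;> simp
  natCast_succ n := by ext <;> simp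
  intCast := Int.cast
  intCast_ofNat n := by ext <;> simp
  intCast_negSucc n := by ext <;> simp [Int.negSucc_eq] <;> push_cast <;> ring

@[simp] lemma intCast_x' (n : ℤ) : (Int.cast n : Kt).x = n := rfl
@[simp] lemma intCast_y' (n : ℤ) : (Int.cast n : Kt).y = 0 := rfl
@[simp] lemma natCast_x' (n : ℕ) : (Nat.cast n : Kt).x = n := rfl
@[simp] lemma natCast_y' (n : ℕ) : (Nat.cast n : Kt).y = 0 := rfl

@[simp] lemma sub_x (u v : Kt) : (u - v).x = u.x - v.x := by
  rw [sub_eq_add_neg, sub_eq_add_neg]; simp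
@[simp] lemma sub_y (u v : Kt) : (u - v).y = u.y - v.y := by
  rw [sub_eq_add_neg, sub_eq_add_neg]; simp

/-- Galois conjugation on `Kt`. -/
def conj : Kt →+* Kt where
  toFun u := ⟨u.x + u.y, -u.y⟩
  map_one' := by ext <;> simp
  map_mul' x y := by ext <;> simp <;> ring
  map_zero' := by ext <;> simp
  map_add' x y := by ext <;> simp <;> ring

@[simp] lemma conj_x (u : Kt) : (conj u).x = u.x + u.y := rfl
@[simp] lemma conj_y (u : Kt) : (conj u).y = -u.y := rfl

end Kt

/-- Inclusion of `Ot` into `Kt`. -/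
def iOK : Ot →+* Kt where
  toFun u := ⟨(u.a : ℚ), (u.b : ℚ)⟩
  map_one' := by ext <;> simp
  map_mul' x y := by ext <;> simp <;> push_cast <;> ring
  map_zero' := by ext <;> simp
  map_add' x y := by ext <;> simp <;> push_cast <;> ring

@[simp] lemma iOK_x (u : Ot) : (iOK u).x = (u.a : ℚ) := rfl
@[simp] lemma iOK_y (u : Ot) : (iOK u).y = (u.b : ℚ) := rfl

/-- Realization of `Kt` inside the reals. -/
def iKR : Kt →+* ℝ where
  toFun v := (v.x : ℝ) + (v.y : ℝ) * gold
  map_one' := by simp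
  map_mul' u v := by
    simp only [Kt.mul_x, Kt.mul_y]
    push_cast
    linear_combination (-(u.y : ℝ) * (v.y : ℝ)) * goldsq
  map_zero' := by simp
  map_add' u v := by simp only [Kt.add_x, Kt.add_y]; push_cast; ring

lemma iKR_apply (v : Kt) : iKR v = (v.x : ℝ) + (v.y : ℝ) * gold := rfl

/-- Realization of `Ot` inside the reals. -/
def iOR : Ot →+* ℝ := iKR.comp iOK

lemma iOR_apply (u : Ot) : iOR u = (u.a : ℝ) + (u.b : ℝ) * gold := rfl

lemma gold_eq : gold = 1/2 + (1/2) * sqrt5 := by unfold gold; ring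

lemma iKR_eq_sqrt5 (v : Kt) : iKR v = ((v.x + v.y/2 : ℚ) : ℝ) + ((v.y/2 : ℚ) : ℝ) * sqrt5 := by
  rw [iKR_apply, gold_eq]; push_cast; ring

lemma iKR_injective : Function.Injective iKR := by
  intro u v h
  rw [iKR_eq_sqrt5, iKR_eq_sqrt5] at h
  obtain ⟨h1, h2⟩ := rat_pair_unique h
  have hy : u.y = v.y := by linarith
  have hx : u.x = v.x := by linarith
  ext <;> assumption

lemma iOR_injective : Function.Injective iOR := by
  intro u v h
  have h2 : iOK u = iOK v := iKR_injective h
  have ha : (u.a : ℚ) = v.a := congrArg Kt.x h2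
  have hb : (u.b : ℚ) = v.b := congrArg Kt.y h2
  ext
  · exact_mod_cast ha
  · exact_mod_cast hb

lemma conjK_iKR (v : Kt) : conjK (iKR v) = iKR (Kt.conj v) := by
  rw [iKR_eq_sqrt5, conjK_spec, iKR_eq_sqrt5]
  simp only [Kt.conj_x, Kt.conj_y]
  push_cast
  ring

lemma inO_iff (x : ℝ) : inO x ↔ ∃ u : Ot, iOR u = x := by
  constructor
  · rintro ⟨m, n, rfl⟩; exact ⟨⟨m, n⟩, rfl⟩
  · rintro ⟨u, rfl⟩; exact ⟨u.a, u.b, rfl⟩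

lemma inK_iKR (v : Kt) : inK (iKR v) := by
  rw [iKR_eq_sqrt5]; exact ⟨_, _, rfl⟩

lemma iOK_conj (u : Ot) : iOK (Ot.conj u) = Kt.conj (iOK u) := by
  ext <;> simp <;> push_cast <;> ring

lemma conjK_iOR (u : Ot) : conjK (iOR u) = iOR (Ot.conj u) := by
  unfold iOR
  simp only [RingHom.comp_apply]
  rw [conjK_iKR, iOK_conj]

/-- The key trace bridge: `x + x' = 2a + b`. -/
lemma trace_bridge (u : Ot) : iOR u + iOR (Ot.conj u) = ((2 * u.a + u.b : ℤ) : ℝ) := by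
  rw [iOR_apply, iOR_apply]
  simp only [Ot.conj_a, Ot.conj_b]
  push_cast
  ring

lemma nrm_real (u : Ot) : iOR u * iOR (Ot.conj u) = ((Ot.nrm u : ℤ) : ℝ) := by
  rw [iOR_apply, iOR_apply]
  simp only [Ot.conj_a, Ot.conj_b, Ot.nrm]
  push_cast
  linear_combination (-(u.b:ℝ)^2) * goldsq

/-! ### `Ot` is a Euclidean domain -/

namespace Ot

instance : Nontrivial Ot := ⟨0, 1, by intro h; exact absurd (congrArg Ot.a h) (by simp)⟩

instance : IsDomain Ot := Function.Injective.isDomain iOR iOR_injective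

@[simp] lemma nrm_eq_zero_iff {x : Ot} : nrm x = 0 ↔ x = 0 := by
  constructor
  · intro h
    have h2 : iOR x * iOR (conj x) = 0 := by rw [nrm_real, h]; simp
    rcases mul_eq_zero.mp h2 with h3 | h3
    · exact iOR_injective (by simpa using h3)
    · have : conj x = 0 := iOR_injective (by simpa using h3)
      have := congrArg conj this
      simpa using this
  · rintro rfl; simp [nrm]

/-- Division with remainder. -/
noncomputable def edQuo (x y : Ot) : Ot :=
  if y = 0 then 0 else
    let N : ℚ := (nrm y : ℚ)
    let z : Ot := x * conj y
    let v : ℚ := (z.b : ℚ) / N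
    let b0 : ℤ := round v
    let w : ℚ := (z.a : ℚ) / N + (v - b0) / 2
    ⟨round w, b0⟩

/-- The `ℚ`-valued norm form. -/
def F (u v : ℚ) : ℚ := u^2 + u * v - v^2

lemma key_identity (x y : Ot) (hy : y ≠ 0) (qa qb : ℤ) :
    (nrm (x - y * ⟨qa, qb⟩) : ℚ) =
      (nrm y : ℚ) * F (((x * conj y).a : ℚ) / (nrm y : ℚ) - qa)
        (((x * conj y).b : ℚ) / (nrm y : ℚ) - qb) := by
  have hNy : (nrm y : ℚ) ≠ 0 := by
    simpa using (fun h => hy (nrm_eq_zero_iff.mp h))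
  rw [eq_comm]
  rw [div_sub' hNy, div_sub' hNy]
  rw [F]
  field_simp
  simp only [nrm, sub_a, sub_b, mul_a, mul_b, conj_a, conj_b]
  push_cast
  ring

lemma key_div (x y : Ot) (hy : y ≠ 0) :
    (nrm (x - y * edQuo x y)).natAbs < (nrm y).natAbs := by
  have hNy : (nrm y : ℚ) ≠ 0 := by
    simpa using (fun h => hy (nrm_eq_zero_iff.mp h))
  rw [edQuo, if_neg hy]
  simp only []
  set N : ℚ := (nrm y : ℚ) with hN
  set z : Ot := x * conj y with hz
  set v : ℚ := (z.b : ℚ) / N with hv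
  set b0 : ℤ := round v with hb0
  set w : ℚ := (z.a : ℚ) / N + (v - b0) / 2 with hw
  have key := key_identity x y hy (round w) b0
  have h1 : |w - round w| ≤ 1/2 := abs_sub_round w
  have h2 : |v - b0| ≤ 1/2 := abs_sub_round v
  have hF : |F ((z.a : ℚ)/N - round w) ((z.b : ℚ)/N - b0)| < 1 := by
    have e1 : (z.a : ℚ)/N - round w = (w - round w) - (v - b0)/2 := by
      rw [hw]; ring
    have e2 : (z.b : ℚ)/N - b0 = v - b0 := by rw [hv]
    rw [e1, e2, F]
    rw [abs_le] at h1 h2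
    rw [abs_lt]
    constructor <;> nlinarith [h1.1, h1.2, h2.1, h2.2, sq_nonneg (v - b0), sq_nonneg (w - round w)]
  have habs : |(nrm (x - y * (⟨round w, b0⟩ : Ot)) : ℚ)| < |N| := by
    rw [key, abs_mul, ← hz, ← hN]
    calc |N| * |F _ _| < |N| * 1 := by
          apply mul_lt_mul_of_pos_left hF (abs_pos.mpr hNy)
      _ = |N| := mul_one _
  have hcast : (↑(nrm (x - y * (⟨round w, b0⟩ : Ot))).natAbs : ℚ) < (↑(nrm y).natAbs : ℚ) := by
    rw [Nat.cast_natAbs, Nat.cast_natAbs, Int.cast_abs, Int.cast_abs]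
    exact habs
  exact_mod_cast hcast

noncomputable instance euclideanDomain : EuclideanDomain Ot where
  quotient := edQuo
  quotient_zero a := by rw [edQuo, if_pos rfl]
  remainder x y := x - y * edQuo x y
  quotient_mul_add_remainder_eq a b := by ring
  r x y := (nrm x).natAbs < (nrm y).natAbs
  r_wellFounded := InvImage.wf (fun x => (nrm x).natAbs) Nat.lt_wfRel.wf
  remainder_lt a b hb := key_div a b hb
  mul_left_not_lt a b hb := by
    intro hlt
    rw [nrm_mul, Int.natAbs_mul] at hlt
    have h1 : 1 ≤ (nrm b).natAbs := by
      rcases Nat.eq_zero_or_pos (nrm b).natAbs with h | h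
      · exact absurd (nrm_eq_zero_iff.mp (Int.natAbs_eq_zero.mp h)) hb
      · exact h
    nlinarith [Nat.le_mul_of_pos_right (nrm a).natAbs (lt_of_lt_of_le Nat.zero_lt_one h1)]

noncomputable instance : GCDMonoid Ot := EuclideanDomain.gcdMonoid Ot

end Ot

/-! ### Quaternions over `Kt` -/

/-- A quaternion literal typed as `ℍ[R]`. -/
def qmk {R : Type*} [CommRing R] (a b c d : R) : ℍ[R] := ⟨a, b, c, d⟩

@[simp] lemma mk_eq_qmk {R : Type*} [CommRing R] (a b c d : R) :
    (⟨a, b, c, d⟩ : ℍ[R]) = qmk a b c d := rfl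
@[simp] lemma qmk_re {R : Type*} [CommRing R] (a b c d : R) : (qmk a b c d).re = a := rfl
@[simp] lemma qmk_imI {R : Type*} [CommRing R] (a b c d : R) : (qmk a b c d).imI = b := rfl
@[simp] lemma qmk_imJ {R : Type*} [CommRing R] (a b c d : R) : (qmk a b c d).imJ = c := rfl
@[simp] lemma qmk_imK {R : Type*} [CommRing R] (a b c d : R) : (qmk a b c d).imK = d := rfl

/-- Functoriality of quaternion algebras. -/
def Hmap {R S : Type} [CommRing R] [CommRing S] (f : R →+* S) : ℍ[R] →+* ℍ[S] where
  toFun x := ⟨f x.re, f x.imI, f x.imJ, f x.imK⟩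
  map_one' := by ext <;> simp
  map_mul' x y := by ext <;> simp <;> ring
  map_zero' := by ext <;> simp
  map_add' x y := by ext <;> simp

@[simp] lemma Hmap_re {R S : Type} [CommRing R] [CommRing S] (f : R →+* S) (x : ℍ[R]) :
    (Hmap f x).re = f x.re := rfl
@[simp] lemma Hmap_imI {R S : Type} [CommRing R] [CommRing S] (f : R →+* S) (x : ℍ[R]) :
    (Hmap f x).imI = f x.imI := rfl
@[simp] lemma Hmap_imJ {R S : Type} [CommRing R] [CommRing S] (f : R →+* S) (x : ℍ[R]) :
    (Hmap f x).imJ = f x.imJ := rfl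
@[simp] lemma Hmap_imK {R S : Type} [CommRing R] [CommRing S] (f : R →+* S) (x : ℍ[R]) :
    (Hmap f x).imK = f x.imK := rfl

/-- The realization `ℍ[Kt] → ℍ[ℝ]`. -/
noncomputable def jH : ℍ[Kt] →+* ℍ[ℝ] := Hmap iKR

/-- Componentwise Galois conjugation. -/
def cH : ℍ[Kt] →+* ℍ[Kt] := Hmap Kt.conj

@[simp] lemma jH_re (x : ℍ[Kt]) : (jH x).re = iKR x.re := rfl
@[simp] lemma jH_imI (x : ℍ[Kt]) : (jH x).imI = iKR x.imI := rfl
@[simp] lemma jH_imJ (x : ℍ[Kt]) : (jH x).imJ = iKR x.imJ := rfl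
@[simp] lemma jH_imK (x : ℍ[Kt]) : (jH x).imK = iKR x.imK := rfl
@[simp] lemma cH_re (x : ℍ[Kt]) : (cH x).re = Kt.conj x.re := rfl
@[simp] lemma cH_imI (x : ℍ[Kt]) : (cH x).imI = Kt.conj x.imI := rfl
@[simp] lemma cH_imJ (x : ℍ[Kt]) : (cH x).imJ = Kt.conj x.imJ := rfl
@[simp] lemma cH_imK (x : ℍ[Kt]) : (cH x).imK = Kt.conj x.imK := rfl

/-- Swap of the two last imaginary coordinates. -/
def swapJK (x : ℍ[Kt]) : ℍ[Kt] := ⟨x.re, x.imI, x.imK, x.imJ⟩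

lemma swapJK_mul (x y : ℍ[Kt]) : swapJK (x * y) = swapJK y * swapJK x := by
  ext <;> simp [swapJK] <;> ring

/-- The twist map on `ℍ[Kt]`. -/
def twistK (x : ℍ[Kt]) : ℍ[Kt] := swapJK (cH x)

lemma twistK_mul (x y : ℍ[Kt]) : twistK (x * y) = twistK y * twistK x := by
  rw [twistK, map_mul, swapJK_mul]; rfl

lemma twist_jH (x : ℍ[Kt]) : twist (jH x) = jH (twistK x) := by
  unfold twist twistK swapJK cH jH
  ext <;> simp [conjK_iKR]

lemma star_jH (x : ℍ[Kt]) : star (jH x) = jH (star x) := by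
  ext <;> simp [map_neg]

lemma trq_jH (x : ℍ[Kt]) : trq (jH x) = iKR (x.re + x.re) := by
  unfold trq
  simp [map_add]

/-- The four `Kt`-quaternion generators. -/
def E1 : ℍ[Kt] := ⟨1, 0, 0, 0⟩
def E2 : ℍ[Kt] := ⟨0, 1, 0, 0⟩
def E3 : ℍ[Kt] := ⟨⟨1/2, 0⟩, ⟨1/2, 0⟩, ⟨1/2, 0⟩, ⟨1/2, 0⟩⟩
def E4 : ℍ[Kt] := ⟨⟨1/2, -(1/2)⟩, ⟨0, 1/2⟩, 0, ⟨1/2, 0⟩⟩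

lemma iKR_mk (a b : ℚ) : iKR ⟨a, b⟩ = (a : ℝ) + (b : ℝ) * gold := rfl

lemma jH_E1 : jH E1 = e₁ := by
  unfold jH E1 e₁; ext <;> simp
lemma jH_E2 : jH E2 = e₂ := by
  unfold jH E2 e₂; ext <;> simp
lemma jH_E3 : jH E3 = e₃ := by
  unfold jH E3 e₃; ext <;> simp [iKR_mk] <;> norm_num
lemma jH_E4 : jH E4 = e₄ := by
  unfold jH E4 e₄; ext <;> simp [iKR_mk] <;> push_cast <;> ring

/-- Scalars from `Ot` as quaternions. -/
def oH (u : Ot) : ℍ[Kt] := ⟨iOK u, 0, 0, 0⟩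

lemma smul_jH (u : Ot) (x : ℍ[Kt]) : iOR u • jH x = jH (oH u * x) := by
  have : iOR u = iKR (iOK u) := rfl
  ext <;> simp [oH, this, smul_eq_mul, map_add, map_sub, map_mul, map_neg] <;> ring

/-- Linear combination of the generators. -/
def Qc (c1 c2 c3 c4 : Ot) : ℍ[Kt] :=
  oH c1 * E1 + oH c2 * E2 + oH c3 * E3 + oH c4 * E4

lemma inI_iff (Y : ℍ[ℝ]) : inI Y ↔ ∃ c1 c2 c3 c4 : Ot, Y = jH (Qc c1 c2 c3 c4) := by
  constructor
  · rintro ⟨r1, r2, r3, r4, h1, h2, h3, h4, rfl⟩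
    obtain ⟨u1, rfl⟩ := (inO_iff _).mp h1
    obtain ⟨u2, rfl⟩ := (inO_iff _).mp h2
    obtain ⟨u3, rfl⟩ := (inO_iff _).mp h3
    obtain ⟨u4, rfl⟩ := (inO_iff _).mp h4
    refine ⟨u1, u2, u3, u4, ?_⟩
    rw [Qc, map_add, map_add, map_add, ← smul_jH, ← smul_jH, ← smul_jH, ← smul_jH,
      jH_E1, jH_E2, jH_E3, jH_E4]
  · rintro ⟨c1, c2, c3, c4, rfl⟩
    refine ⟨iOR c1, iOR c2, iOR c3, iOR c4, (inO_iff _).mpr ⟨c1, rfl⟩, (inO_iff _).mpr ⟨c2, rfl⟩,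
      (inO_iff _).mpr ⟨c3, rfl⟩, (inO_iff _).mpr ⟨c4, rfl⟩, ?_⟩
    rw [Qc, map_add, map_add, map_add, ← smul_jH, ← smul_jH, ← smul_jH, ← smul_jH,
      jH_E1, jH_E2, jH_E3, jH_E4]

/-- The `Ot`-bilinear form in coordinates (twice the Euclidean inner product). -/
def BB (c1 c2 c3 c4 d1 d2 d3 d4 : Ot) : Ot :=
  (c1*d1 + c2*d2 + c3*d3 + c4*d4) + (c1*d1 + c2*d2 + c3*d3 + c4*d4)
  + (c1*d3 + c3*d1) + (1 - Ot.tau) * (c1*d4 + c4*d1)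
  + (c2*d3 + c3*d2) + Ot.tau * (c2*d4 + c4*d2) + (c3*d4 + c4*d3)

/-- The quadratic form `nr` in coordinates. -/
def nuO (c1 c2 c3 c4 : Ot) : Ot :=
  c1*c1 + c2*c2 + c3*c3 + c4*c4 + c1*c3 + (1 - Ot.tau)*(c1*c4) + c2*c3
    + Ot.tau*(c2*c4) + c3*c4

set_option maxHeartbeats 2000000 in
lemma key_re (a c1 c2 c3 c4 d1 d2 d3 d4 : Ot) :
    (oH a * Qc c1 c2 c3 c4 * star (Qc d1 d2 d3 d4)).re
      + (oH a * Qc c1 c2 c3 c4 * star (Qc d1 d2 d3 d4)).re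
      = iOK (a * BB c1 c2 c3 c4 d1 d2 d3 d4) := by
  apply Kt.ext <;>
    simp only [Qc, oH, E1, E2, E3, E4, mk_eq_qmk, qmk_re, qmk_imI, qmk_imJ, qmk_imK, BB, Ot.tau, Quaternion.re_mul, Quaternion.imI_mul,
      Quaternion.imJ_mul, Quaternion.imK_mul, Quaternion.re_add, Quaternion.imI_add,
      Quaternion.imJ_add, Quaternion.imK_add, Quaternion.re_star, Quaternion.imI_star,
      Quaternion.imJ_star, Quaternion.imK_star, Kt.mul_x, Kt.mul_y, Kt.add_x, Kt.add_y,
      Kt.neg_x, Kt.neg_y, Kt.sub_x, Kt.sub_y, Kt.zero_x, Kt.zero_y, Kt.one_x, Kt.one_y,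
      iOK_x, iOK_y, Ot.mul_a, Ot.mul_b, Ot.add_a, Ot.add_b, Ot.sub_a, Ot.sub_b,
      Ot.one_a, Ot.one_b, Ot.neg_a, Ot.neg_b] <;>
    push_cast <;> ring

set_option maxHeartbeats 2000000 in
lemma key_nr (c1 c2 c3 c4 : Ot) :
    (Qc c1 c2 c3 c4 * star (Qc c1 c2 c3 c4)).re = iOK (nuO c1 c2 c3 c4) := by
  apply Kt.ext <;>
    simp only [Qc, oH, E1, E2, E3, E4, mk_eq_qmk, qmk_re, qmk_imI, qmk_imJ, qmk_imK, nuO, Ot.tau, Quaternion.re_mul, Quaternion.imI_mul,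
      Quaternion.imJ_mul, Quaternion.imK_mul, Quaternion.re_add, Quaternion.imI_add,
      Quaternion.imJ_add, Quaternion.imK_add, Quaternion.re_star, Quaternion.imI_star,
      Quaternion.imJ_star, Quaternion.imK_star, Kt.mul_x, Kt.mul_y, Kt.add_x, Kt.add_y,
      Kt.neg_x, Kt.neg_y, Kt.sub_x, Kt.sub_y, Kt.zero_x, Kt.zero_y, Kt.one_x, Kt.one_y,
      iOK_x, iOK_y, Ot.mul_a, Ot.mul_b, Ot.add_a, Ot.add_b, Ot.sub_a, Ot.sub_b,
      Ot.one_a, Ot.one_b, Ot.neg_a, Ot.neg_b] <;>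
    push_cast <;> ring

/-! ### arithmetic helpers -/

namespace Ot

/-- `√5 = 2τ - 1` inside `Ot`. -/
def sq5 : Ot := ⟨-1, 2⟩

lemma sq5_sq : sq5 * sq5 = ((5:ℤ) : Ot) := by ext <;> simp [sq5] <;> decide

lemma sq5_ne_zero : sq5 ≠ 0 := by
  intro h; exact absurd (congrArg Ot.b h) (by simp [sq5])

@[simp] lemma nrm_sq5 : nrm sq5 = -5 := by norm_num [nrm, sq5]

@[simp] lemma nrm_intCast (n : ℤ) : nrm (n : Ot) = n^2 := by simp [nrm]

lemma isUnit_of_nrm_isUnit {u : Ot} (h : IsUnit (nrm u)) : IsUnit u := by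
  rcases Int.isUnit_iff.mp h with h1 | h1
  · exact IsUnit.of_mul_eq_one (conj u) (by rw [mul_conj_self, h1]; ext <;> simp)
  · exact IsUnit.of_mul_eq_one (-conj u)
      (by rw [mul_neg, mul_conj_self, h1]; ext <;> simp)

lemma not_isUnit_intCast {k : ℤ} (hk : 2 ≤ k) : ¬ IsUnit (k : Ot) := by
  intro h
  obtain ⟨v, hv⟩ := IsUnit.exists_right_inv h
  have h0 := congrArg nrm hv
  rw [nrm_mul, nrm_intCast, nrm_one] at h0
  have h2 : k^2 ∣ 1 := ⟨_, h0.symm⟩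
  have := Int.le_of_dvd one_pos h2
  nlinarith

lemma conj_dvd_conj {u v : Ot} (h : u ∣ v) : conj u ∣ conj v := by
  obtain ⟨c, rfl⟩ := h; exact ⟨conj c, by rw [map_mul]⟩

@[simp] lemma conj_intCast (n : ℤ) : conj (n : Ot) = (n : Ot) := map_intCast conj n

end Ot

open Ot in
/-- The main local obstruction: no rational prime divides `√5 · α` when the extension
condition holds. -/
lemma no_prime_divides (ao nu : Ot) (hnu : nu ≠ 0)
    (hassoc : Associated (gcd nu (Ot.conj nu) * ao^2) (Ot.conj nu))
    (p : ℕ) (hp : p.Prime) (hdvd : (p : Ot) ∣ sq5 * ao) : False := by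
  have hpz : ((p:ℤ) : Ot) = (p : Ot) := by push_cast; rfl
  -- first produce an integer k ≥ 2 with (k : Ot) ∣ ao^2
  obtain ⟨k, hk2, hkdvd⟩ : ∃ k : ℤ, 2 ≤ k ∧ (k : Ot) ∣ ao^2 := by
    by_cases h5 : p = 5
    · subst h5
      refine ⟨5, by norm_num, ?_⟩
      have h1 : sq5 * sq5 ∣ sq5 * ao := by
        rw [sq5_sq]; exact_mod_cast hdvd
      obtain ⟨c, hc⟩ := h1
      have h2 : ao = sq5 * c := mul_left_cancel₀ sq5_ne_zero (by rw [hc]; ring)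
      refine ⟨c * c, ?_⟩
      rw [h2, ← sq5_sq]; ring
    · have hp2 : (2:ℤ) ≤ (p:ℤ) := by exact_mod_cast hp.two_le
      refine ⟨(p:ℤ)^2, by nlinarith, ?_⟩
      -- p is coprime to sq5
      have hcop : IsCoprime ((p:ℤ) : Ot) sq5 := by
        rw [← EuclideanDomain.gcd_isUnit_iff]
        set d := EuclideanDomain.gcd (((p:ℤ)) : Ot) sq5 with hd
        have hd1 : d ∣ (((p:ℤ)) : Ot) := EuclideanDomain.gcd_dvd_left _ _
        have hd2 : d ∣ sq5 := EuclideanDomain.gcd_dvd_right _ _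
        have hn1 : nrm d ∣ (p:ℤ)^2 := by simpa only [nrm_intCast] using nrm_dvd hd1
        have hn2 : nrm d ∣ -5 := by simpa using nrm_dvd hd2
        have hc : IsCoprime ((p:ℤ)) (5:ℤ) := by
          rw [Int.isCoprime_iff_gcd_eq_one]
          have h55 : ((5:ℕ):ℤ) = (5:ℤ) := by norm_num
          rw [← h55, Int.gcd_natCast_natCast]
          exact (Nat.coprime_primes hp (by norm_num)).mpr h5
        have hcop2 : IsCoprime ((p:ℤ)^2) (-5 : ℤ) := (hc.pow_left).neg_right
        exact isUnit_of_nrm_isUnit (hcop2.isUnit_of_dvd' hn1 hn2)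
      have hpao : (((p:ℤ)) : Ot) ∣ ao := by
        refine hcop.dvd_of_dvd_mul_left ?_
        rw [hpz]; exact hdvd
      have h3 := pow_dvd_pow_of_dvd hpao 2
      rwa [← Int.cast_pow] at h3
  -- now run the gcd contradiction
  set g := gcd nu (Ot.conj nu) with hg
  have hgnz : g ≠ 0 := fun h0 => hnu ((gcd_eq_zero_iff _ _).mp (hg ▸ h0)).1
  have h1 : g * (k : Ot) ∣ Ot.conj nu :=
    dvd_trans (mul_dvd_mul_left g hkdvd) hassoc.dvd
  have h2 : Ot.conj g * (k : Ot) ∣ nu := by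
    have := Ot.conj_dvd_conj h1
    rwa [map_mul, Ot.conj_intCast, Ot.conj_conj] at this
  have hcg : Associated (Ot.conj g) g := by
    apply associated_of_dvd_dvd
    · exact dvd_gcd (by simpa using Ot.conj_dvd_conj (gcd_dvd_right nu (Ot.conj nu)))
        (Ot.conj_dvd_conj (gcd_dvd_left nu (Ot.conj nu)))
    · have h4 : Ot.conj (Ot.conj g) ∣ Ot.conj g := by
        apply Ot.conj_dvd_conj
        exact dvd_gcd (by simpa using Ot.conj_dvd_conj (gcd_dvd_right nu (Ot.conj nu)))
          (Ot.conj_dvd_conj (gcd_dvd_left nu (Ot.conj nu)))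
      simpa using h4
  have h3 : g * (k : Ot) ∣ nu := dvd_trans ((hcg.symm.mul_right ((k:Ot))).dvd) h2
  have h5 : g * (k : Ot) ∣ g * 1 := by
    rw [mul_one]
    exact dvd_gcd h3 h1
  have h6 : (k : Ot) ∣ 1 := (mul_dvd_mul_iff_left hgnz).mp h5
  exact Ot.not_isUnit_intCast hk2 (isUnit_of_dvd_one h6)

/-- `1/2` is not in `𝔬`. -/
lemma half_not_inO : ¬ inO ((1:ℝ)/2) := by
  rintro ⟨m, n, h⟩
  rw [gold_eq] at h
  have h' : ((m + n/2 - 1/2 : ℚ) : ℝ) + ((n/2 : ℚ) : ℝ) * sqrt5 = 0 := by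
    push_cast
    linarith [h]
  obtain ⟨h1, h2⟩ := rat_pair_eq_zero h'
  have hn : (n:ℚ) = 0 := by linarith
  have hm : (2*m : ℚ) = 1 := by linarith
  have : (2*m : ℤ) = 1 := by exact_mod_cast hm
  omega

lemma Qc_zero : Qc 0 0 0 0 = 0 := by
  have : oH 0 = 0 := by ext <;> simp [oH]
  simp [Qc, this]

/-- A nonzero `nr`. -/
lemma nr_eq_zero_iff (Y : ℍ[ℝ]) : nr Y = 0 ↔ Y = 0 := by
  unfold nr
  constructor
  · intro h
    simp only [Quaternion.re_mul, Quaternion.re_star, Quaternion.imI_star, Quaternion.imJ_star,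
      Quaternion.imK_star, mul_neg, sub_neg_eq_add] at h
    have p1 : 0 ≤ Y.re * Y.re := mul_self_nonneg _
    have p2 : 0 ≤ Y.imI * Y.imI := mul_self_nonneg _
    have p3 : 0 ≤ Y.imJ * Y.imJ := mul_self_nonneg _
    have p4 : 0 ≤ Y.imK * Y.imK := mul_self_nonneg _
    have h1 : Y.re * Y.re = 0 := by linarith
    have h2 : Y.imI * Y.imI = 0 := by linarith
    have h3 : Y.imJ * Y.imJ = 0 := by linarith
    have h4 : Y.imK * Y.imK = 0 := by linarith
    ext <;> simp [mul_self_eq_zero.mp h1, mul_self_eq_zero.mp h2, mul_self_eq_zero.mp h3,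
      mul_self_eq_zero.mp h4]
  · rintro rfl; simp

/-- The inverse of a nonzero element of `𝔬`, expressed inside `K`. -/
lemma inv_key (u : Ot) (hu : u ≠ 0) :
    (iOR u)⁻¹ =
      iKR ⟨((u.a + u.b : ℤ) : ℚ) / (Ot.nrm u : ℚ), ((-u.b : ℤ) : ℚ) / (Ot.nrm u : ℚ)⟩ := by
  have hn : Ot.nrm u ≠ 0 := fun h => hu (Ot.nrm_eq_zero_iff.mp h)
  have hnR : ((Ot.nrm u : ℤ) : ℝ) ≠ 0 := by exact_mod_cast hn
  apply inv_eq_of_mul_eq_one_right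
  have hv : iKR ⟨((u.a + u.b : ℤ) : ℚ) / (Ot.nrm u : ℚ), ((-u.b : ℤ) : ℚ) / (Ot.nrm u : ℚ)⟩
      = iOR (Ot.conj u) / ((Ot.nrm u : ℤ) : ℝ) := by
    rw [iKR_apply, iOR_apply]
    simp only [Ot.conj_a, Ot.conj_b]
    push_cast
    ring
  rw [hv, mul_div_assoc']
  rw [nrm_real u]
  exact div_self hnR

/-- `BB` expanded along the second argument. -/
lemma BB_eq_T (c1 c2 c3 c4 d1 d2 d3 d4 : Ot) :
    BB c1 c2 c3 c4 d1 d2 d3 d4 =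
      (c1 + c1 + c3 + (1 - Ot.tau) * c4) * d1
      + (c2 + c2 + c3 + Ot.tau * c4) * d2
      + (c1 + c2 + c3 + c3 + c4) * d3
      + ((1 - Ot.tau)*c1 + Ot.tau*c2 + c3 + c4 + c4) * d4 := by
  unfold BB; ring

lemma BB_diag (c1 c2 c3 c4 : Ot) :
    BB c1 c2 c3 c4 c1 c2 c3 c4 = nuO c1 c2 c3 c4 + nuO c1 c2 c3 c4 := by
  unfold BB nuO; ring

lemma BB_smul (x c1 c2 c3 c4 d1 d2 d3 d4 : Ot) :
    BB c1 c2 c3 c4 (x*d1) (x*d2) (x*d3) (x*d4) = x * BB c1 c2 c3 c4 d1 d2 d3 d4 := by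
  unfold BB; ring

/-- The four adjugate identities: the Gram matrix is invertible over `𝔬`. -/
lemma adj_c1 (c1 c2 c3 c4 : Ot) :
    (c1 + c1 + c3 + (1 - Ot.tau) * c4) + (c1 + c1 + c3 + (1 - Ot.tau) * c4)
      - (c2 + c2 + c3 + Ot.tau * c4)
      - Ot.tau * (c1 + c2 + c3 + c3 + c4)
      + (Ot.tau + Ot.tau - 1) * ((1 - Ot.tau)*c1 + Ot.tau*c2 + c3 + c4 + c4) = c1 := by
  ext <;> simp [Ot.tau] <;> ring

lemma adj_c2 (c1 c2 c3 c4 : Ot) :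
    - (c1 + c1 + c3 + (1 - Ot.tau) * c4)
      + (c2 + c2 + c3 + Ot.tau * c4) + (c2 + c2 + c3 + Ot.tau * c4)
      + (Ot.tau - 1) * (c1 + c2 + c3 + c3 + c4)
      + (1 - Ot.tau - Ot.tau) * ((1 - Ot.tau)*c1 + Ot.tau*c2 + c3 + c4 + c4) = c2 := by
  ext <;> simp [Ot.tau] <;> ring

lemma adj_c3 (c1 c2 c3 c4 : Ot) :
    - Ot.tau * (c1 + c1 + c3 + (1 - Ot.tau) * c4)
      + (Ot.tau - 1) * (c2 + c2 + c3 + Ot.tau * c4)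
      + ((c1 + c2 + c3 + c3 + c4) + (c1 + c2 + c3 + c3 + c4))
      - (((1 - Ot.tau)*c1 + Ot.tau*c2 + c3 + c4 + c4)
          + ((1 - Ot.tau)*c1 + Ot.tau*c2 + c3 + c4 + c4)) = c3 := by
  ext <;> simp [Ot.tau] <;> ring

lemma adj_c4 (c1 c2 c3 c4 : Ot) :
    (Ot.tau + Ot.tau - 1) * (c1 + c1 + c3 + (1 - Ot.tau) * c4)
      + (1 - Ot.tau - Ot.tau) * (c2 + c2 + c3 + Ot.tau * c4)
      - ((c1 + c2 + c3 + c3 + c4) + (c1 + c2 + c3 + c3 + c4))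
      + (((1 - Ot.tau)*c1 + Ot.tau*c2 + c3 + c4 + c4) + ((1 - Ot.tau)*c1 + Ot.tau*c2 + c3 + c4 + c4)
          + ((1 - Ot.tau)*c1 + Ot.tau*c2 + c3 + c4 + c4)
          + ((1 - Ot.tau)*c1 + Ot.tau*c2 + c3 + c4 + c4)) = c4 := by
  ext <;> simp [Ot.tau] <;> ring

lemma Qc_smul (x c1 c2 c3 c4 : Ot) :
    Qc (x*c1) (x*c2) (x*c3) (x*c4) = oH x * Qc c1 c2 c3 c4 := by
  have h : ∀ u v : Ot, oH (u * v) = oH u * oH v := by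
    intro u v
    ext <;> simp [oH, map_mul]
  simp only [Qc, h, mul_add, mul_assoc]

theorem exists_trace_one_of_extension (q : ℍ[ℝ]) (n : ℕ) (α : ℝ)
    (hprim : PrimitiveIcosian q) (hadm : Admissible q n)
    (hα : inO α)
    (hext : {x : ℝ | ∃ c : ℝ, inO c ∧ x = α ^ 2 * nr q * c} =
      {x : ℝ | ∃ c : ℝ, inO c ∧ x = nr q * c} ∩
        {x : ℝ | ∃ c : ℝ, inO c ∧ x = conjK (nr q) * c}) :
    ∃ z : ℍ[ℝ], inI z ∧
      trq ((α • q) * star z) + trq (twist (star z) * twist (α • q)) = 1 := by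
  obtain ⟨hqI, hqprim⟩ := hprim
  obtain ⟨c1, c2, c3, c4, rfl⟩ := (inI_iff q).mp hqI
  obtain ⟨ao, rfl⟩ := (inO_iff α).mp hα
  set ν : Ot := nuO c1 c2 c3 c4 with hν
  -- nr in coordinates
  have hnr : nr (jH (Qc c1 c2 c3 c4)) = iOR ν := by
    unfold nr
    rw [star_jH, ← map_mul, jH_re, key_nr]
    rfl
  have hq0 : jH (Qc c1 c2 c3 c4) ≠ 0 := by
    intro h0
    have hK : inK ((1:ℝ)/2) := ⟨(1/2 : ℚ), 0, by push_cast; ring⟩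
    have hI : inI (((1:ℝ)/2) • jH (Qc c1 c2 c3 c4)) := by
      rw [h0, smul_zero]
      exact (inI_iff 0).mpr ⟨0,0,0,0, by rw [Qc_zero, map_zero]⟩
    exact half_not_inO (hqprim _ hK hI)
  have hν0 : ν ≠ 0 := by
    intro h0
    exact hq0 ((nr_eq_zero_iff _).mp (by rw [hnr, h0, map_zero]))
  have hconj : conjK (nr (jH (Qc c1 c2 c3 c4))) = iOR (Ot.conj ν) := by
    rw [hnr]; exact conjK_iOR ν
  -- first consequence of hext : ν' ∣ ao² ν
  have hOt1 : ∃ e1 : Ot, ao^2 * ν = Ot.conj ν * e1 := by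
    have hx : (iOR ao) ^ 2 * nr (jH (Qc c1 c2 c3 c4)) * 1 ∈
        {x : ℝ | ∃ c : ℝ, inO c ∧ x = (iOR ao) ^ 2 * nr (jH (Qc c1 c2 c3 c4)) * c} :=
      ⟨1, (inO_iff 1).mpr ⟨1, map_one iOR⟩, rfl⟩
    rw [hext] at hx
    obtain ⟨-, cr, hcr, heq⟩ := hx
    obtain ⟨e1, rfl⟩ := (inO_iff cr).mp hcr
    refine ⟨e1, iOR_injective ?_⟩
    rw [map_mul, map_mul, map_pow, ← hnr, ← hconj]
    linear_combination heq
  obtain ⟨e1, he1⟩ := hOt1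
  -- the lcm is associated to ao² ν
  have hassoc0 : Associated (ao^2 * ν) (lcm ν (Ot.conj ν)) := by
    have hd1 : ν ∣ ao^2 * ν := ⟨ao^2, by ring⟩
    have hd2 : Ot.conj ν ∣ ao^2 * ν := ⟨e1, he1⟩
    refine associated_of_dvd_dvd ?_ (lcm_dvd hd1 hd2)
    -- ao²ν ∣ lcm, via hext
    obtain ⟨k1, hk1⟩ := dvd_lcm_left ν (Ot.conj ν)
    obtain ⟨k2, hk2⟩ := dvd_lcm_right ν (Ot.conj ν)
    have hx : iOR (lcm ν (Ot.conj ν)) ∈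
        {x : ℝ | ∃ c : ℝ, inO c ∧ x = (iOR ao) ^ 2 * nr (jH (Qc c1 c2 c3 c4)) * c} := by
      rw [hext]
      constructor
      · exact ⟨iOR k1, (inO_iff _).mpr ⟨k1, rfl⟩, by rw [hnr, ← map_mul, ← hk1]⟩
      · exact ⟨iOR k2, (inO_iff _).mpr ⟨k2, rfl⟩, by rw [hconj, ← map_mul, ← hk2]⟩
    obtain ⟨cr, hcr, heq⟩ := hx
    obtain ⟨e2, rfl⟩ := (inO_iff cr).mp hcr
    refine ⟨e2, iOR_injective ?_⟩
    rw [map_mul, map_mul, map_pow, ← hnr]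
    linear_combination heq
  have hassoc : Associated (gcd ν (Ot.conj ν) * ao^2) (Ot.conj ν) := by
    have h5 : Associated (gcd ν (Ot.conj ν) * (ao^2 * ν)) (gcd ν (Ot.conj ν) * lcm ν (Ot.conj ν)) :=
      Associated.mul_left _ hassoc0
    have h6 := h5.trans (gcd_mul_lcm ν (Ot.conj ν))
    have h7 : ν * (gcd ν (Ot.conj ν) * ao^2) = gcd ν (Ot.conj ν) * (ao^2 * ν) := by ring
    have h8 : Associated (ν * (gcd ν (Ot.conj ν) * ao^2)) (ν * Ot.conj ν) := by
      rw [h7]; exact h6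
    exact h8.of_mul_left (Associated.refl ν) (by
      intro h0
      exact hν0 h0)
  -- no prime divides √5·ao
  have hTr : ∀ pp : ℕ, pp.Prime → ¬ ((pp : Ot) ∣ Ot.sq5 * ao) := fun pp hpp hdvd =>
    no_prime_divides ao ν hν0 hassoc pp hpp hdvd
  -- hence the two integer traces are coprime
  set γ1 : ℤ := 2 * ao.a + ao.b with hγ1
  set γ2 : ℤ := ao.a + 3 * ao.b with hγ2
  have hg1 : Int.gcd γ1 γ2 = 1 := by
    by_contra hne
    obtain ⟨p, pp, hdp⟩ := Nat.exists_prime_and_dvd hne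
    have hd1 : (p:ℤ) ∣ γ1 := dvd_trans (Int.natCast_dvd_natCast.mpr hdp) (Int.gcd_dvd_left _ _)
    have hd2 : (p:ℤ) ∣ γ2 := dvd_trans (Int.natCast_dvd_natCast.mpr hdp) (Int.gcd_dvd_right _ _)
    obtain ⟨k1, hk1⟩ : (p:ℤ) ∣ (γ2 - γ1) := dvd_sub hd2 hd1
    obtain ⟨k2, hk2⟩ := hd1
    refine hTr p pp ⟨⟨k1, k2⟩, ?_⟩
    ext
    · show (Ot.sq5 * ao).a = ((p:Ot) * ⟨k1, k2⟩).a
      simp [Ot.sq5]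
      omega
    · show (Ot.sq5 * ao).b = ((p:Ot) * ⟨k1, k2⟩).b
      simp [Ot.sq5]
      omega
  have hbez := Int.gcd_eq_gcd_ab γ1 γ2
  rw [hg1] at hbez
  set A : ℤ := Int.gcdA γ1 γ2 with hA
  set B : ℤ := Int.gcdB γ1 γ2 with hB
  -- the Gram-dual elements
  set T1 : Ot := c1 + c1 + c3 + (1 - Ot.tau) * c4 with hT1
  set T2 : Ot := c2 + c2 + c3 + Ot.tau * c4 with hT2
  set T3 : Ot := c1 + c2 + c3 + c3 + c4 with hT3
  set T4 : Ot := (1 - Ot.tau)*c1 + Ot.tau*c2 + c3 + c4 + c4 with hT4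
  set g4 : Ot := EuclideanDomain.gcd T1 (EuclideanDomain.gcd T2 (EuclideanDomain.gcd T3 T4))
    with hg4
  obtain ⟨t1, ht1⟩ : g4 ∣ T1 := EuclideanDomain.gcd_dvd_left _ _
  obtain ⟨t2, ht2⟩ : g4 ∣ T2 :=
    dvd_trans (EuclideanDomain.gcd_dvd_right _ _) (EuclideanDomain.gcd_dvd_left _ _)
  obtain ⟨t3, ht3⟩ : g4 ∣ T3 :=
    dvd_trans (dvd_trans (EuclideanDomain.gcd_dvd_right _ _) (EuclideanDomain.gcd_dvd_right _ _))
      (EuclideanDomain.gcd_dvd_left _ _)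
  obtain ⟨t4, ht4⟩ : g4 ∣ T4 :=
    dvd_trans (dvd_trans (EuclideanDomain.gcd_dvd_right _ _) (EuclideanDomain.gcd_dvd_right _ _))
      (EuclideanDomain.gcd_dvd_right _ _)
  -- the coordinates are multiples of g4
  have hc1 : c1 = g4 * (t1 + t1 - t2 - Ot.tau * t3 + (Ot.tau + Ot.tau - 1) * t4) := by
    rw [← adj_c1 c1 c2 c3 c4, ← hT1, ← hT2, ← hT3, ← hT4, ht1, ht2, ht3, ht4]; ring
  have hc2 : c2 = g4 * (- t1 + t2 + t2 + (Ot.tau - 1) * t3 + (1 - Ot.tau - Ot.tau) * t4) := by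
    rw [← adj_c2 c1 c2 c3 c4, ← hT1, ← hT2, ← hT3, ← hT4, ht1, ht2, ht3, ht4]; ring
  have hc3 : c3 = g4 * (- (Ot.tau * t1) + (Ot.tau - 1) * t2 + (t3 + t3) - (t4 + t4)) := by
    rw [← adj_c3 c1 c2 c3 c4, ← hT1, ← hT2, ← hT3, ← hT4, ht1, ht2, ht3, ht4]; ring
  have hc4 : c4 = g4 * ((Ot.tau + Ot.tau - 1) * t1 + (1 - Ot.tau - Ot.tau) * t2 - (t3 + t3)
      + (t4 + t4 + t4 + t4)) := by
    rw [← adj_c4 c1 c2 c3 c4, ← hT1, ← hT2, ← hT3, ← hT4, ht1, ht2, ht3, ht4]; ring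
  set u1 : Ot := t1 + t1 - t2 - Ot.tau * t3 + (Ot.tau + Ot.tau - 1) * t4 with hu1
  set u2 : Ot := - t1 + t2 + t2 + (Ot.tau - 1) * t3 + (1 - Ot.tau - Ot.tau) * t4 with hu2
  set u3 : Ot := - (Ot.tau * t1) + (Ot.tau - 1) * t2 + (t3 + t3) - (t4 + t4) with hu3
  set u4 : Ot := (Ot.tau + Ot.tau - 1) * t1 + (1 - Ot.tau - Ot.tau) * t2 - (t3 + t3)
      + (t4 + t4 + t4 + t4) with hu4
  have hg40 : g4 ≠ 0 := by
    intro h0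
    apply hν0
    rw [hν]
    rw [hc1, hc2, hc3, hc4, h0]
    unfold nuO; ring
  -- g4 is a unit, by primitivity
  have hunit : IsUnit g4 := by
    by_contra hns
    have hβ0 : iOR g4 ≠ 0 := fun h => hg40 (iOR_injective (by rw [h, map_zero]))
    have hKinv : inK ((iOR g4)⁻¹) := by rw [inv_key g4 hg40]; exact inK_iKR _
    have hIinv : inI ((iOR g4)⁻¹ • jH (Qc c1 c2 c3 c4)) := by
      refine (inI_iff _).mpr ⟨u1, u2, u3, u4, ?_⟩
      rw [hc1, hc2, hc3, hc4, Qc_smul, ← smul_jH, smul_smul, inv_mul_cancel₀ hβ0, one_smul]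
    have huO := hqprim _ hKinv hIinv
    obtain ⟨h, hh⟩ := (inO_iff _).mp huO
    have hOne : iOR (h * g4) = iOR 1 := by
      rw [map_mul, map_one, hh]; exact inv_mul_cancel₀ hβ0
    exact hns (IsUnit.of_mul_eq_one h (by rw [mul_comm]; exact iOR_injective hOne))
  obtain ⟨w, hw⟩ := hunit.exists_right_inv
  -- Bézout for the four T's
  have e34 := EuclideanDomain.gcd_eq_gcd_ab T3 T4
  have e234 := EuclideanDomain.gcd_eq_gcd_ab T2 (EuclideanDomain.gcd T3 T4)
  have e1234 := EuclideanDomain.gcd_eq_gcd_ab T1 (EuclideanDomain.gcd T2 (EuclideanDomain.gcd T3 T4))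
  set B1 : Ot := EuclideanDomain.gcdB T1 (EuclideanDomain.gcd T2 (EuclideanDomain.gcd T3 T4))
  set B2 : Ot := EuclideanDomain.gcdB T2 (EuclideanDomain.gcd T3 T4)
  set s1 : Ot := EuclideanDomain.gcdA T1 (EuclideanDomain.gcd T2 (EuclideanDomain.gcd T3 T4))
  set s2 : Ot := B1 * EuclideanDomain.gcdA T2 (EuclideanDomain.gcd T3 T4)
  set s3 : Ot := B1 * B2 * EuclideanDomain.gcdA T3 T4
  set s4 : Ot := B1 * B2 * EuclideanDomain.gcdB T3 T4
  have hBez : T1*s1 + T2*s2 + T3*s3 + T4*s4 = g4 := by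
    rw [hg4]
    linear_combination (-1 : Ot) * e1234 - B1 * e234 - (B1*B2) * e34
  -- the final coefficients
  set x : Ot := ⟨A, B⟩ with hx
  set d1 : Ot := x * (s1 * w) with hd1
  set d2 : Ot := x * (s2 * w) with hd2
  set d3 : Ot := x * (s3 * w) with hd3
  set d4 : Ot := x * (s4 * w) with hd4
  have hB0 : BB c1 c2 c3 c4 (s1*w) (s2*w) (s3*w) (s4*w) = 1 := by
    rw [BB_eq_T, ← hT1, ← hT2, ← hT3, ← hT4]
    linear_combination w * hBez + hw
  have hBx : BB c1 c2 c3 c4 d1 d2 d3 d4 = x := by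
    rw [hd1, hd2, hd3, hd4, BB_smul, hB0, mul_one]
  -- the witness
  refine ⟨jH (Qc d1 d2 d3 d4), (inI_iff _).mpr ⟨d1, d2, d3, d4, rfl⟩, ?_⟩
  -- compute the two traces
  have hsm : (iOR ao) • jH (Qc c1 c2 c3 c4) = jH (oH ao * Qc c1 c2 c3 c4) := smul_jH ao _
  set W : ℍ[Kt] := oH ao * Qc c1 c2 c3 c4 * star (Qc d1 d2 d3 d4) with hW
  have ht1' : (iOR ao • jH (Qc c1 c2 c3 c4)) * star (jH (Qc d1 d2 d3 d4)) = jH W := by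
    rw [hsm, star_jH, ← map_mul, hW]
  have ht2' : twist (star (jH (Qc d1 d2 d3 d4))) * twist (iOR ao • jH (Qc c1 c2 c3 c4))
      = jH (twistK W) := by
    rw [hsm, star_jH, twist_jH, twist_jH, ← map_mul, ← twistK_mul, hW]
  rw [ht1', ht2', trq_jH, trq_jH]
  have hre : W.re + W.re = iOK (ao * BB c1 c2 c3 c4 d1 d2 d3 d4) := key_re ao c1 c2 c3 c4 d1 d2 d3 d4
  have hre2 : (twistK W).re + (twistK W).re = Kt.conj (W.re + W.re) := by
    rw [map_add]; rfl
  rw [hre2, hre, hBx, ← iOK_conj]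
  have hfin : iKR (iOK (ao * x)) + iKR (iOK (Ot.conj (ao * x)))
      = ((2 * (ao * x).a + (ao * x).b : ℤ) : ℝ) := trace_bridge (ao * x)
  rw [hfin]
  have hval : 2 * (ao * x).a + (ao * x).b = 1 := by
    simp only [Ot.mul_a, Ot.mul_b, hx]
    rw [hγ1, hγ2] at hbez
    push_cast at hbez ⊢
    linarith [hbez]
  rw [hval]
  norm_num
end
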